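/- For any connected graph G on n vertices, the rainbow vertex-connection number satisfies rvc(G) ≤ n − 2. -/

import Mathlib

open SimpleGraph

/-- A coloring `c` is a rainbow vertex-coloring witness with `k` colors: any two vertices are
joined by a path whose internal vertices have distinct colors, all among the first `k` colors. -/
def IsRainbowVColoring {V : Type*} (G : SimpleGraph V) (c : V → ℕ) (k : ℕ) : Prop :=
  ∀ u v : V, ∃ p : G.Walk u v, p.IsPath ∧ (p.support.tail.dropLast.map c).Nodup ∧
    ∀ w ∈ p.support.tail.dropLast, c w < k

/-- The rainbow vertex-connection number. -/
noncomputable def rvc {V : Type*} (G : SimpleGraph V) : ℕ :=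
  sInf {k : ℕ | ∃ c : V → ℕ, IsRainbowVColoring G c k}

section RVCAux

variable {α β : Type*}

lemma rvcAux_tail_dropLast_eq_nil {l : List α} (h : l.length ≤ 2) : l.tail.dropLast = [] := by
  apply List.eq_nil_of_length_eq_zero
  rw [List.length_dropLast, List.length_tail]
  omega

lemma rvcAux_tail_dropLast_comm (l : List α) : l.tail.dropLast = l.dropLast.tail := by
  cases l with
  | nil => simp
  | cons a t =>
    cases t with
    | nil => simp
    | cons b t' =>
      show (b :: t').dropLast = ((a :: b :: t').dropLast).tail
      rw [List.dropLast_cons_of_ne_nil (List.cons_ne_nil b t'), List.tail_cons]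

lemma rvcAux_dropLast_reverse (l : List α) : l.reverse.dropLast = l.tail.reverse := by
  have h := List.tail_reverse (l := l.reverse)
  rw [List.reverse_reverse] at h
  rw [h, List.reverse_reverse]

lemma rvcAux_reverse_tail_dropLast (l : List α) :
    l.reverse.tail.dropLast = l.tail.dropLast.reverse := by
  rw [List.tail_reverse, rvcAux_dropLast_reverse,
    ← rvcAux_tail_dropLast_comm]

lemma rvcAux_map_tail_dropLast (f : α → β) (l : List α) :
    (l.map f).tail.dropLast = (l.tail.dropLast).map f := by
  rw [← List.map_tail, ← List.map_dropLast]

lemma rvcAux_nodup_recolor {l : List α} {c' f : α → ℕ} {u' : α} {k : ℕ}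
    (hl : l.Nodup) (hn : (l.map c').Nodup) (hlt : ∀ z ∈ l, z ≠ u' → c' z < k)
    (hf1 : ∀ z, z ≠ u' → f z = c' z) (hf2 : f u' = k) :
    (l.map f).Nodup := by
  refine List.Nodup.map_on ?_ hl
  intro z hz w hw h
  by_cases hzu : z = u'
  · by_cases hwu : w = u'
    · rw [hzu, hwu]
    · rw [hzu, hf2, hf1 w hwu] at h
      exact absurd h.symm (Nat.ne_of_lt (hlt w hw hwu))
  · by_cases hwu : w = u'
    · rw [hwu, hf2, hf1 z hzu] at h
      exact absurd h (Nat.ne_of_lt (hlt z hz hzu))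
    · rw [hf1 z hzu, hf1 w hwu] at h
      exact List.inj_on_of_nodup_map hn hz hw h

lemma rvcAux_reach_induce {V : Type*} {G : SimpleGraph V} {s : Set V} :
    ∀ {a b : V} (p : G.Walk a b), (∀ w ∈ p.support, w ∈ s) →
      ∀ (ha : a ∈ s) (hb : b ∈ s), (G.induce s).Reachable ⟨a, ha⟩ ⟨b, hb⟩ := by
  intro a b p
  induction p with
  | nil => intro _ ha _; exact Reachable.refl _
  | @cons a' c b' h p ih =>
    intro hsup ha hb
    have hc : c ∈ s := hsup c (by simp)
    have h1 : (G.induce s).Adj ⟨a', ha⟩ ⟨c, hc⟩ := h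
    exact h1.reachable.trans (ih (fun w hw => hsup w (by simp [hw])) hc hb)

universe u

lemma rvcAux_key (n : ℕ) : ∀ {V : Type u} [Fintype V] (G : SimpleGraph V),
    G.Connected → Fintype.card V = n → 2 ≤ n →
    ∃ c : V → ℕ, IsRainbowVColoring G c (n - 2) := by
  induction n using Nat.strong_induction_on with
  | _ n ih =>
  intro V _ G hG hcard hn
  classical
  by_cases h2 : n = 2
  · subst h2
    refine ⟨fun _ => 0, fun u v => ?_⟩
    obtain ⟨p⟩ := hG.preconnected u v
    have hnd := p.bypass_isPath.support_nodup
    have hlen : p.bypass.support.length ≤ 2 := hcard ▸ hnd.length_le_card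
    have h0 : p.bypass.support.tail.dropLast = ([] : List V) :=
      rvcAux_tail_dropLast_eq_nil hlen
    exact ⟨p.bypass, p.bypass_isPath, by simp [h0], by simp [h0]⟩
  · have hn3 : 3 ≤ n := by omega
    have hpos : 0 < Fintype.card V := by omega
    have hne : Nonempty V := Fintype.card_pos_iff.mp hpos
    haveI := hne
    obtain ⟨r⟩ := hne
    obtain ⟨x, hx⟩ := Finite.exists_max (G.dist r)
    have hxr : x ≠ r := by
      obtain ⟨y, hy⟩ := Fintype.exists_ne_of_one_lt_card (by omega) r
      have h1 : 0 < G.dist r y := hG.pos_dist_of_ne (Ne.symm hy)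
      intro hxr
      have h2' := hx y
      rw [hxr, SimpleGraph.dist_self] at h2'
      omega
    set s : Set V := {x}ᶜ with hs
    have hmem : ∀ {v : V}, v ∈ s ↔ v ≠ x := by intro v; simp [hs]
    have havoid : ∀ v, v ≠ x → ∃ p : G.Walk r v, ∀ w ∈ p.support, w ∈ s := by
      intro v hv
      obtain ⟨p, hp⟩ := hG.exists_walk_length_eq_dist r v
      refine ⟨p, fun w hw => hmem.mpr ?_⟩
      intro hwx
      subst hwx
      have h3 : (p.takeUntil w hw).length + (p.dropUntil w hw).length = p.length := by
        rw [← SimpleGraph.Walk.length_append, SimpleGraph.Walk.take_spec]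
      have h4 := SimpleGraph.dist_le (p.takeUntil w hw)
      have h5 := SimpleGraph.dist_le (p.dropUntil w hw)
      have h6 := hx v
      have h7 : G.dist w v = 0 := by omega
      exact hv (hG.dist_eq_zero_iff.mp h7).symm
    have hrs : r ∈ s := hmem.mpr (Ne.symm hxr)
    have hG' : (G.induce s).Connected := by
      rw [SimpleGraph.connected_iff]
      refine ⟨fun a b => ?_, ⟨⟨r, hrs⟩⟩⟩
      obtain ⟨pa, hpa⟩ := havoid a.1 (hmem.mp a.2)
      obtain ⟨pb, hpb⟩ := havoid b.1 (hmem.mp b.2)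
      exact (rvcAux_reach_induce pa hpa hrs a.2).symm.trans (rvcAux_reach_induce pb hpb hrs b.2)
    have hcards : Fintype.card ↥s = n - 1 := by
      have h8 : Fintype.card ↥s = Fintype.card {v : V // ¬ v = x} :=
        Fintype.card_congr (Equiv.subtypeEquivRight (fun v => hmem))
      rw [Fintype.card_subtype_compl, Fintype.card_subtype_eq] at h8
      omega
    obtain ⟨c', hc'⟩ := ih (n - 1) (by omega) (G.induce s) hG' hcards (by omega)
    have hadj : ∃ u, G.Adj x u := by
      obtain ⟨y, hy⟩ := Fintype.exists_ne_of_one_lt_card (by omega) x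
      obtain ⟨p⟩ := hG.preconnected x y
      cases p with
      | nil => exact absurd rfl hy
      | cons h _ => exact ⟨_, h⟩
    obtain ⟨u, hxu⟩ := hadj
    have hus : u ∈ s := hmem.mpr hxu.ne'
    let u' : ↥s := ⟨u, hus⟩
    let c : V → ℕ := fun v =>
      if hv : v ∈ s then (if (⟨v, hv⟩ : ↥s) = u' then n - 3 else c' ⟨v, hv⟩) else 0
    have hcs : ∀ z : ↥s, c z.1 = if z = u' then n - 3 else c' z := by
      intro z
      show dite _ _ _ = _
      rw [dif_pos z.2]
    have hcu : c u = n - 3 := by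
      have h9 := hcs u'
      rw [if_pos rfl] at h9
      exact h9
    have hsub : n - 1 - 2 = n - 3 := by omega
    have transfer : ∀ z w : ↥s, ∃ p : G.Walk z.1 w.1, p.IsPath ∧ (∀ y ∈ p.support, y ∈ s) ∧
        (p.support.tail.dropLast.map c).Nodup ∧
        (∀ y ∈ p.support.tail.dropLast, c y < n - 2 ∧ (y ≠ u → c y < n - 3)) := by
      intro z w
      obtain ⟨q', hq'path, hq'nodup, hq'lt⟩ := hc' z w
      rw [hsub] at hq'lt
      let f : G.induce s →g G := ⟨Subtype.val, fun h => h⟩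
      have hfinj : Function.Injective (f : ↥s → V) := Subtype.val_injective
      refine ⟨q'.map f, SimpleGraph.Walk.map_isPath_of_injective hfinj hq'path, ?_, ?_, ?_⟩
      · intro y hy
        rw [SimpleGraph.Walk.support_map] at hy
        obtain ⟨z0, _, rfl⟩ := List.mem_map.mp hy
        exact z0.2
      · rw [SimpleGraph.Walk.support_map, rvcAux_map_tail_dropLast, List.map_map]
        have hvnd : (q'.support.tail.dropLast).Nodup :=
          hq'path.support_nodup.sublist
            ((List.dropLast_sublist _).trans (List.tail_sublist _))
        refine rvcAux_nodup_recolor (u' := u') hvnd hq'nodup (fun z0 hz0 _ => hq'lt z0 hz0)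
          (fun z0 hz0 => ?_) ?_
        · have hdz := hcs z0
          rw [if_neg hz0] at hdz
          exact hdz
        · have hdz := hcs u'
          rw [if_pos rfl] at hdz
          exact hdz
      · intro y hy
        rw [SimpleGraph.Walk.support_map, rvcAux_map_tail_dropLast] at hy
        obtain ⟨z0, hz0, rfl⟩ := List.mem_map.mp hy
        have hcz : c (f z0) = if z0 = u' then n - 3 else c' z0 := hcs z0
        rw [hcz]
        by_cases hz0u : z0 = u'
        · rw [if_pos hz0u]
          refine ⟨by omega, fun hyu => ?_⟩
          exact absurd (show f z0 = u by rw [hz0u]; exact rfl) hyu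
        · rw [if_neg hz0u]
          have h10 := hq'lt z0 hz0
          exact ⟨by omega, fun _ => h10⟩
    have xside : ∀ v, v ≠ x → ∃ p : G.Walk x v, p.IsPath ∧
        (p.support.tail.dropLast.map c).Nodup ∧
        ∀ w ∈ p.support.tail.dropLast, c w < n - 2 := by
      intro v hv
      obtain ⟨q, hqp, hqs, hqnd, hqlt⟩ := transfer u' ⟨v, hmem.mpr hv⟩
      have hxq : x ∉ q.support := fun h => (hmem.mp (hqs x h)) rfl
      have hsupp : (SimpleGraph.Walk.cons hxu q).support.tail.dropLast =
          q.support.dropLast := by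
        rw [SimpleGraph.Walk.support_cons, List.tail_cons]
      have hcu' : c u'.1 = n - 3 := hcu
      refine ⟨SimpleGraph.Walk.cons hxu q,
        (SimpleGraph.Walk.cons_isPath_iff hxu q).mpr ⟨hqp, hxq⟩, ?_, ?_⟩
      · rw [hsupp]
        by_cases ht : q.support.tail = []
        · have hdl : q.support.dropLast = [] := by
            rw [q.support_eq_cons, ht]
            simp
          simp [hdl]
        · have hdl : q.support.dropLast = u'.1 :: q.support.tail.dropLast := by
            conv_lhs => rw [q.support_eq_cons]
            rw [List.dropLast_cons_of_ne_nil ht]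
          rw [hdl, List.map_cons, List.nodup_cons]
          refine ⟨?_, hqnd⟩
          intro hmem'
          obtain ⟨y, hy, hyc⟩ := List.mem_map.mp hmem'
          have hyne : y ≠ u := by
            have hnd := hqp.support_nodup
            rw [q.support_eq_cons] at hnd
            have hyt : y ∈ q.support.tail := (List.dropLast_sublist _).subset hy
            intro hh
            have hyt' : u ∈ q.support.tail := hh ▸ hyt
            exact (List.nodup_cons.mp hnd).1 hyt'
          have h11 := (hqlt y hy).2 hyne
          rw [hcu'] at hyc
          omega
      · intro w hw
        rw [hsupp] at hw
        by_cases ht : q.support.tail = []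
        · have hdl : q.support.dropLast = [] := by
            rw [q.support_eq_cons, ht]
            simp
          rw [hdl] at hw
          exact absurd hw (List.not_mem_nil (a := w))
        · have hdl : q.support.dropLast = u'.1 :: q.support.tail.dropLast := by
            conv_lhs => rw [q.support_eq_cons]
            rw [List.dropLast_cons_of_ne_nil ht]
          rw [hdl] at hw
          rcases List.mem_cons.mp hw with hh | hh
          · rw [hh, hcu']
            omega
          · exact (hqlt w hh).1
    refine ⟨c, fun va vb => ?_⟩
    by_cases hax : va = x
    · by_cases hbx : vb = x
      · rw [hax, hbx]
        exact ⟨SimpleGraph.Walk.nil, SimpleGraph.Walk.IsPath.nil, by simp, by simp⟩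
      · rw [hax]
        exact xside vb hbx
    · by_cases hbx : vb = x
      · rw [hbx]
        obtain ⟨p, h1, h2, h3⟩ := xside va hax
        refine ⟨p.reverse, h1.reverse, ?_, ?_⟩
        · rw [SimpleGraph.Walk.support_reverse, rvcAux_reverse_tail_dropLast,
            List.map_reverse]
          exact List.nodup_reverse.mpr h2
        · intro w hw
          rw [SimpleGraph.Walk.support_reverse, rvcAux_reverse_tail_dropLast,
            List.mem_reverse] at hw
          exact h3 w hw
      · obtain ⟨p, h1, _, h2, h3⟩ := transfer ⟨va, hmem.mpr hax⟩ ⟨vb, hmem.mpr hbx⟩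
        exact ⟨p, h1, h2, fun w hw => (h3 w hw).1⟩

end RVCAux

theorem stmt_0 {V : Type*} [Fintype V] (G : SimpleGraph V) (hG : G.Connected)
    (hn : 2 ≤ Fintype.card V) :
    rvc G ≤ Fintype.card V - 2 := by
  obtain ⟨c, hc⟩ := rvcAux_key (Fintype.card V) G hG rfl hn
  exact Nat.sInf_le ⟨c, hc⟩
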